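/- arXiv:1201.4799 — 4 statements merged into one kernel-verified Lean document; each statement's English description precedes it below -/
import Mathlib

section
/- Let U ⊆ ℂ be open and h : U → ℂ holomorphic with Im h′(z) ≠ 0 for all z ∈ U. Identify U with an open subset of ℝ² via z = x + iy and define u(x,y) = h(x+iy) + conj(h(x+iy)), v(x,y) = i·(h(x+iy) − conj(h(x+iy))), and θ(x,y) = (1/2)·arctan( Re h′(x+iy) / Im h′(x+iy) ). Then the Saint-Venant–Von Mises plasticity equation (u_y + v_x)·sin(2θ) + (u_x − v_y)·cos(2θ) = 0 holds at every point of U. -/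
theorem stmt_4 (U : Set ℂ) (hU : IsOpen U) (h : ℂ → ℂ) (hh : DifferentiableOn ℂ h U)
    (hIm : ∀ z ∈ U, (deriv h z).im ≠ 0)
    (u v θ : ℝ × ℝ → ℝ)
    (hu : u = fun p => (h ((p.1 : ℂ) + (p.2 : ℂ) * Complex.I) +
      starRingEnd ℂ (h ((p.1 : ℂ) + (p.2 : ℂ) * Complex.I))).re)
    (hv : v = fun p => (Complex.I * (h ((p.1 : ℂ) + (p.2 : ℂ) * Complex.I) -
      starRingEnd ℂ (h ((p.1 : ℂ) + (p.2 : ℂ) * Complex.I)))).re)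
    (hθ : θ = fun p => (1 / 2) * Real.arctan
      ((deriv h ((p.1 : ℂ) + (p.2 : ℂ) * Complex.I)).re /
       (deriv h ((p.1 : ℂ) + (p.2 : ℂ) * Complex.I)).im)) :
    ∀ p : ℝ × ℝ, (p.1 : ℂ) + (p.2 : ℂ) * Complex.I ∈ U →
      (fderiv ℝ u p (0, 1) + fderiv ℝ v p (1, 0)) * Real.sin (2 * θ p) +
        (fderiv ℝ u p (1, 0) - fderiv ℝ v p (0, 1)) * Real.cos (2 * θ p) = 0 := by
  intro p hp
  set z : ℂ := (p.1 : ℂ) + (p.2 : ℂ) * Complex.I with hz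
  have hdz : DifferentiableAt ℂ h z := hh.differentiableAt (hU.mem_nhds hp)
  set c : ℂ := deriv h z with hc
  have hb : c.im ≠ 0 := hIm z hp
  set L : ℝ × ℝ →L[ℝ] ℂ :=
    Complex.ofRealCLM.comp (ContinuousLinearMap.fst ℝ ℝ ℝ) +
      (ContinuousLinearMap.snd ℝ ℝ ℝ).smulRight Complex.I with hL
  have hLfun : (fun q : ℝ × ℝ => (q.1 : ℂ) + (q.2 : ℂ) * Complex.I) = ⇑L := by
    funext q
    simp [hL, Complex.real_smul]
  set F : ℂ →L[ℝ] ℂ :=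
    ((1 : ℂ →L[ℂ] ℂ).smulRight c).restrictScalars ℝ with hF
  have hz' : HasFDerivAt h F z := (hdz.hasDerivAt.hasFDerivAt).restrictScalars ℝ
  have hLd : HasFDerivAt (fun q : ℝ × ℝ => (q.1 : ℂ) + (q.2 : ℂ) * Complex.I) L p := by
    rw [hLfun]; exact L.hasFDerivAt
  have hcomp : HasFDerivAt (fun q : ℝ × ℝ => h ((q.1 : ℂ) + (q.2 : ℂ) * Complex.I))
      (F.comp L) p := hz'.comp p hLd
  have hre : HasFDerivAt (fun q : ℝ × ℝ => (h ((q.1 : ℂ) + (q.2 : ℂ) * Complex.I)).re)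
      (Complex.reCLM.comp (F.comp L)) p := Complex.reCLM.hasFDerivAt.comp p hcomp
  have him : HasFDerivAt (fun q : ℝ × ℝ => (h ((q.1 : ℂ) + (q.2 : ℂ) * Complex.I)).im)
      (Complex.imCLM.comp (F.comp L)) p := Complex.imCLM.hasFDerivAt.comp p hcomp
  have hufun : u = fun q : ℝ × ℝ => 2 * (h ((q.1 : ℂ) + (q.2 : ℂ) * Complex.I)).re := by
    rw [hu]; funext q; simp [Complex.add_re, Complex.conj_re]; ring
  have hvfun : v = fun q : ℝ × ℝ => -2 * (h ((q.1 : ℂ) + (q.2 : ℂ) * Complex.I)).im := by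
    rw [hv]; funext q
    simp [Complex.mul_re, Complex.sub_re, Complex.sub_im, Complex.conj_re, Complex.conj_im]
    ring
  have hu' : HasFDerivAt u ((2 : ℝ) • (Complex.reCLM.comp (F.comp L))) p := by
    rw [hufun]; exact hre.const_mul 2
  have hv' : HasFDerivAt v ((-2 : ℝ) • (Complex.imCLM.comp (F.comp L))) p := by
    rw [hvfun]; exact him.const_mul (-2)
  have eL10 : L (1, 0) = 1 := by simp [hL]
  have eL01 : L (0, 1) = Complex.I := by simp [hL]
  have eF1 : F 1 = c := by simp [hF]
  have eFI : F Complex.I = Complex.I * c := by simp [hF]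
  have eu10 : fderiv ℝ u p (1, 0) = 2 * c.re := by
    rw [hu'.fderiv]; simp [eL10, eF1]
  have eu01 : fderiv ℝ u p (0, 1) = -2 * c.im := by
    rw [hu'.fderiv]; simp [eL01, eFI, Complex.mul_re]
  have ev10 : fderiv ℝ v p (1, 0) = -2 * c.im := by
    rw [hv'.fderiv]; simp [eL10, eF1]
  have ev01 : fderiv ℝ v p (0, 1) = -2 * c.re := by
    rw [hv'.fderiv]; simp [eL01, eFI, Complex.mul_im]
  have hθ2 : 2 * θ p = Real.arctan (c.re / c.im) := by
    rw [hθ]; push_cast; ring_nf; rfl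
  rw [eu10, eu01, ev10, ev01, hθ2, Real.sin_arctan, Real.cos_arctan]
  have hs : Real.sqrt (1 + (c.re / c.im) ^ 2) ≠ 0 := by
    positivity
  field_simp
  ring
end

section
/- Let I ⊆ ℝ be an open interval, Ω ∈ ℝ, and g : I → ℝ a twice continuously differentiable function with g(ξ) > 0 for all ξ ∈ I, satisfying the ordinary differential equation g·g″ − (3/2)·(g′)² + (Ω/2)·g³ = 0 on I. Then the function ξ ↦ (g′(ξ))²/g(ξ)³ + Ω·ln g(ξ) is constant on I. -/
theorem stmt_6 (a b : ℝ) (Ω : ℝ) (g : ℝ → ℝ)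
    (hg : ContDiffOn ℝ 2 g (Set.Ioo a b))
    (hpos : ∀ ξ ∈ Set.Ioo a b, 0 < g ξ)
    (hode : ∀ ξ ∈ Set.Ioo a b,
      g ξ * deriv (deriv g) ξ - (3 / 2) * (deriv g ξ) ^ 2 + (Ω / 2) * (g ξ) ^ 3 = 0) :
    ∀ ξ₁ ∈ Set.Ioo a b, ∀ ξ₂ ∈ Set.Ioo a b,
      (deriv g ξ₁) ^ 2 / (g ξ₁) ^ 3 + Ω * Real.log (g ξ₁) =
      (deriv g ξ₂) ^ 2 / (g ξ₂) ^ 3 + Ω * Real.log (g ξ₂) := by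
  set F : ℝ → ℝ := fun ξ => (deriv g ξ) ^ 2 / (g ξ) ^ 3 + Ω * Real.log (g ξ) with hF
  have hopen : IsOpen (Set.Ioo a b) := isOpen_Ioo
  have hg1 : ContDiffOn ℝ 1 (deriv g) (Set.Ioo a b) :=
    hg.deriv_of_isOpen hopen (by norm_num)
  have key : ∀ ξ ∈ Set.Ioo a b, HasDerivAt F 0 ξ := by
    intro ξ hξ
    have hmem : Set.Ioo a b ∈ nhds ξ := hopen.mem_nhds hξ
    have hgd : HasDerivAt g (deriv g ξ) ξ := by
      have := (hg.contDiffAt hmem).differentiableAt (by norm_num)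
      exact this.hasDerivAt
    have hgd2 : HasDerivAt (deriv g) (deriv (deriv g) ξ) ξ := by
      have := (hg1.contDiffAt hmem).differentiableAt one_ne_zero
      exact this.hasDerivAt
    have hgpos := hpos ξ hξ
    have hg0 : g ξ ≠ 0 := ne_of_gt hgpos
    have h1 : HasDerivAt (fun x => (deriv g x) ^ 2 / (g x) ^ 3)
        ((2 * deriv g ξ * deriv (deriv g) ξ * (g ξ) ^ 3
          - (deriv g ξ) ^ 2 * (3 * (g ξ) ^ 2 * deriv g ξ)) / ((g ξ) ^ 3) ^ 2) ξ := by
      have hnum : HasDerivAt (fun x => (deriv g x) ^ 2)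
          (2 * deriv g ξ * deriv (deriv g) ξ) ξ := by
        have := hgd2.pow 2
        simpa [Pi.pow_def, mul_comm, mul_assoc, mul_left_comm] using this
      have hden : HasDerivAt (fun x => (g x) ^ 3) (3 * (g ξ) ^ 2 * deriv g ξ) ξ := by
        have := hgd.pow 3
        simpa [Pi.pow_def, mul_comm, mul_assoc, mul_left_comm] using this
      exact hnum.div hden (pow_ne_zero _ hg0)
    have h2 : HasDerivAt (fun x => Ω * Real.log (g x)) (Ω * (deriv g ξ / g ξ)) ξ := by
      have hlog : HasDerivAt (fun x => Real.log (g x)) (deriv g ξ / g ξ) ξ := by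
        have := (Real.hasDerivAt_log hg0).comp ξ hgd
        simpa [Function.comp_def, div_eq_inv_mul, mul_comm] using this
      exact hlog.const_mul Ω
    have hsum := h1.add h2
    have hode' := hode ξ hξ
    have hDD : deriv (deriv g) ξ = ((3 / 2) * (deriv g ξ) ^ 2 - (Ω / 2) * (g ξ) ^ 3) / g ξ := by
      field_simp
      linarith
    have hzero : (2 * deriv g ξ * deriv (deriv g) ξ * (g ξ) ^ 3
          - (deriv g ξ) ^ 2 * (3 * (g ξ) ^ 2 * deriv g ξ)) / ((g ξ) ^ 3) ^ 2
        + Ω * (deriv g ξ / g ξ) = 0 := by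
      rw [hDD]
      field_simp
      ring
    rw [hzero] at hsum
    exact hsum
  intro ξ₁ hξ₁ ξ₂ hξ₂
  have hdiff : DifferentiableOn ℝ F (Set.Ioo a b) := fun ξ hξ =>
    ((key ξ hξ).differentiableAt).differentiableWithinAt
  have hfd : ∀ ξ ∈ Set.Ioo a b, fderivWithin ℝ F (Set.Ioo a b) ξ = 0 := by
    intro ξ hξ
    rw [fderivWithin_of_isOpen hopen hξ, (key ξ hξ).hasFDerivAt.fderiv]
    ext
    simp
  exact (convex_Ioo a b).is_const_of_fderivWithin_eq_zero hdiff hfd hξ₁ hξ₂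
end

section
/- Let a ∈ ℝ, let U ⊆ ℝ² be open, and let u, φ : U → ℝ be twice continuously differentiable functions satisfying u_x + φ_y = √2·a·exp(u/2)·sin(φ/2) and u_y − φ_x = −√2·a·exp(u/2)·cos(φ/2) on U. Then u satisfies the Liouville equation u_xx + u_yy = a²·exp(u) on U. -/
set_option maxHeartbeats 1000000

open Real Filter ContinuousLinearMap

theorem stmt_13 (a : ℝ) (U : Set (ℝ × ℝ)) (hU : IsOpen U)
    (u φ : ℝ × ℝ → ℝ)
    (hu : ContDiffOn ℝ 2 u U) (hφ : ContDiffOn ℝ 2 φ U)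
    (h1 : ∀ p ∈ U, fderiv ℝ u p (1, 0) + fderiv ℝ φ p (0, 1) =
      Real.sqrt 2 * a * Real.exp (u p / 2) * Real.sin (φ p / 2))
    (h2 : ∀ p ∈ U, fderiv ℝ u p (0, 1) - fderiv ℝ φ p (1, 0) =
      -(Real.sqrt 2 * a * Real.exp (u p / 2) * Real.cos (φ p / 2))) :
    ∀ p ∈ U,
      fderiv ℝ (fun q => fderiv ℝ u q (1, 0)) p (1, 0) +
        fderiv ℝ (fun q => fderiv ℝ u q (0, 1)) p (0, 1) =
      a ^ 2 * Real.exp (u p) := by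
  intro p hp
  have hmem : U ∈ nhds p := hU.mem_nhds hp
  have hup : ContDiffAt ℝ 2 u p := hu.contDiffAt hmem
  have hφp : ContDiffAt ℝ 2 φ p := hφ.contDiffAt hmem
  have hud : DifferentiableAt ℝ u p := hup.differentiableAt two_ne_zero
  have hφd : DifferentiableAt ℝ φ p := hφp.differentiableAt two_ne_zero
  have huA : DifferentiableAt ℝ (fderiv ℝ u) p :=
    (hup.fderiv_right (m := 1) (by norm_num)).differentiableAt one_ne_zero
  have hφB : DifferentiableAt ℝ (fderiv ℝ φ) p :=
    (hφp.fderiv_right (m := 1) (by norm_num)).differentiableAt one_ne_zero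
  set A := fderiv ℝ (fderiv ℝ u) p with hA
  set B := fderiv ℝ (fderiv ℝ φ) p with hB
  have hAp : HasFDerivAt (fderiv ℝ u) A p := huA.hasFDerivAt
  have hBp : HasFDerivAt (fderiv ℝ φ) B p := hφB.hasFDerivAt
  -- symmetry of B
  have hφev : ∀ᶠ y in nhds p, HasFDerivAt φ (fderiv ℝ φ y) y := by
    filter_upwards [hU.eventually_mem hp] with y hy
    exact ((hφ.contDiffAt (hU.mem_nhds hy)).differentiableAt two_ne_zero).hasFDerivAt
  have hBsymm : ∀ v w, B v w = B w v := fun v w =>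
    second_derivative_symmetric_of_eventually hφev hBp v w
  -- derivative of exp (u q / 2)
  have hu2 : HasFDerivAt (fun q => u q / 2) ((2:ℝ)⁻¹ • fderiv ℝ u p) p := by
    simpa [div_eq_inv_mul, smul_eq_mul, Pi.smul_def] using hud.hasFDerivAt.const_smul (2:ℝ)⁻¹
  have hφ2 : HasFDerivAt (fun q => φ q / 2) ((2:ℝ)⁻¹ • fderiv ℝ φ p) p := by
    simpa [div_eq_inv_mul, smul_eq_mul, Pi.smul_def] using hφd.hasFDerivAt.const_smul (2:ℝ)⁻¹
  have hE : HasFDerivAt (fun q => Real.exp (u q / 2))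
      (Real.exp (u p / 2) • ((2:ℝ)⁻¹ • fderiv ℝ u p)) p :=
    (Real.hasDerivAt_exp _).comp_hasFDerivAt p hu2
  have hS : HasFDerivAt (fun q => Real.sin (φ q / 2))
      (Real.cos (φ p / 2) • ((2:ℝ)⁻¹ • fderiv ℝ φ p)) p :=
    (Real.hasDerivAt_sin _).comp_hasFDerivAt p hφ2
  have hC : HasFDerivAt (fun q => Real.cos (φ q / 2))
      ((-Real.sin (φ p / 2)) • ((2:ℝ)⁻¹ • fderiv ℝ φ p)) p :=
    (Real.hasDerivAt_cos _).comp_hasFDerivAt p hφ2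
  set c : ℝ := Real.sqrt 2 * a with hcdef
  have hcE : HasFDerivAt (fun q => c * Real.exp (u q / 2))
      (c • (Real.exp (u p / 2) • ((2:ℝ)⁻¹ • fderiv ℝ u p))) p := hE.const_mul c
  have hF1 : HasFDerivAt (fun q => c * Real.exp (u q / 2) * Real.sin (φ q / 2))
      ((c * Real.exp (u p / 2)) • (Real.cos (φ p / 2) • ((2:ℝ)⁻¹ • fderiv ℝ φ p)) +
        Real.sin (φ p / 2) • (c • (Real.exp (u p / 2) • ((2:ℝ)⁻¹ • fderiv ℝ u p)))) p :=
    hcE.mul hS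
  have hF2 : HasFDerivAt (fun q => -(c * Real.exp (u q / 2) * Real.cos (φ q / 2)))
      (-((c * Real.exp (u p / 2)) • ((-Real.sin (φ p / 2)) • ((2:ℝ)⁻¹ • fderiv ℝ φ p)) +
        Real.cos (φ p / 2) • (c • (Real.exp (u p / 2) • ((2:ℝ)⁻¹ • fderiv ℝ u p))))) p :=
    (hcE.mul hC).neg
  -- LHS derivatives
  have hL1 : HasFDerivAt (fun q => fderiv ℝ u q (1, 0) + fderiv ℝ φ q (0, 1))
      ((ContinuousLinearMap.apply ℝ ℝ ((1:ℝ), (0:ℝ))).comp A +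
       (ContinuousLinearMap.apply ℝ ℝ ((0:ℝ), (1:ℝ))).comp B) p :=
    (((ContinuousLinearMap.apply ℝ ℝ ((1:ℝ),(0:ℝ))).hasFDerivAt.comp p hAp).add
      ((ContinuousLinearMap.apply ℝ ℝ ((0:ℝ),(1:ℝ))).hasFDerivAt.comp p hBp))
  have hL2 : HasFDerivAt (fun q => fderiv ℝ u q (0, 1) - fderiv ℝ φ q (1, 0))
      ((ContinuousLinearMap.apply ℝ ℝ ((0:ℝ), (1:ℝ))).comp A -
       (ContinuousLinearMap.apply ℝ ℝ ((1:ℝ), (0:ℝ))).comp B) p :=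
    (((ContinuousLinearMap.apply ℝ ℝ ((0:ℝ),(1:ℝ))).hasFDerivAt.comp p hAp).sub
      ((ContinuousLinearMap.apply ℝ ℝ ((1:ℝ),(0:ℝ))).hasFDerivAt.comp p hBp))
  -- eventual equality transfers
  have heq1 : (fun q => fderiv ℝ u q (1, 0) + fderiv ℝ φ q (0, 1)) =ᶠ[nhds p]
      (fun q => c * Real.exp (u q / 2) * Real.sin (φ q / 2)) := by
    filter_upwards [hU.eventually_mem hp] with q hq
    simpa [hcdef, mul_assoc] using h1 q hq
  have heq2 : (fun q => fderiv ℝ u q (0, 1) - fderiv ℝ φ q (1, 0)) =ᶠ[nhds p]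
      (fun q => -(c * Real.exp (u q / 2) * Real.cos (φ q / 2))) := by
    filter_upwards [hU.eventually_mem hp] with q hq
    simpa [hcdef, mul_assoc] using h2 q hq
  have hL1' := hF1.congr_of_eventuallyEq heq1
  have hL2' := hF2.congr_of_eventuallyEq heq2
  have key1 := hL1.unique hL1'
  have key2 := hL2.unique hL2'
  -- evaluate
  have e1 := congrArg (fun (L : (ℝ × ℝ) →L[ℝ] ℝ) => L ((1:ℝ),(0:ℝ))) key1
  have e2 := congrArg (fun (L : (ℝ × ℝ) →L[ℝ] ℝ) => L ((0:ℝ),(1:ℝ))) key2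
  simp only [ContinuousLinearMap.add_apply, ContinuousLinearMap.sub_apply,
    ContinuousLinearMap.comp_apply, ContinuousLinearMap.apply_apply,
    ContinuousLinearMap.smul_apply, ContinuousLinearMap.neg_apply, smul_eq_mul] at e1 e2
  -- goal rewriting: fderiv of eval functions equal to A/B applied
  have gA1 : fderiv ℝ (fun q => fderiv ℝ u q (1, 0)) p =
      (ContinuousLinearMap.apply ℝ ℝ ((1:ℝ),(0:ℝ))).comp A :=
    (((ContinuousLinearMap.apply ℝ ℝ ((1:ℝ),(0:ℝ))).hasFDerivAt.comp p hAp)).fderiv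
  have gA2 : fderiv ℝ (fun q => fderiv ℝ u q (0, 1)) p =
      (ContinuousLinearMap.apply ℝ ℝ ((0:ℝ),(1:ℝ))).comp A :=
    (((ContinuousLinearMap.apply ℝ ℝ ((0:ℝ),(1:ℝ))).hasFDerivAt.comp p hAp)).fderiv
  rw [gA1, gA2]
  simp only [ContinuousLinearMap.comp_apply, ContinuousLinearMap.apply_apply]
  have hsym := hBsymm ((1:ℝ),(0:ℝ)) ((0:ℝ),(1:ℝ))
  have hpy : Real.sin (φ p / 2) ^ 2 + Real.cos (φ p / 2) ^ 2 = 1 :=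
    Real.sin_sq_add_cos_sq _
  have hsq : Real.sqrt 2 * Real.sqrt 2 = 2 := Real.mul_self_sqrt (by norm_num)
  have hexp : Real.exp (u p / 2) * Real.exp (u p / 2) = Real.exp (u p) := by
    rw [← Real.exp_add]; ring_nf
  have hux := h1 p hp
  have huy := h2 p hp
  rw [hcdef] at e1 e2 hux huy
  linear_combination e1 + e2 - hsym +
      (Real.sqrt 2 * a * Real.exp (u p / 2) * Real.sin (φ p / 2) / 2) * hux -
      (Real.sqrt 2 * a * Real.exp (u p / 2) * Real.cos (φ p / 2) / 2) * huy +
      ((Real.sqrt 2 * a) ^ 2 * Real.exp (u p / 2) ^ 2 / 2) * hpy +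
      (a ^ 2 * Real.exp (u p / 2) ^ 2 / 2) * hsq + a ^ 2 * hexp
end

section
/- Let a > 0 be a real constant, U ⊆ ℂ an open set, and ψ : U → ℂ holomorphic with ψ′(z) ≠ 0 and Re ψ(z) > 0 for every z ∈ U. Identify U with an open subset of ℝ² via z = x + iy and define u(x,y) = 2·ln( √8·|ψ′(x+iy)| / ( a·(ψ(x+iy) + conj(ψ(x+iy))) ) ). Then u is real-valued, twice continuously differentiable, and satisfies the Liouville equation u_xx + u_yy = a²·exp(u) on U. -/
noncomputable def stmt15γ : ℝ × ℝ →L[ℝ] ℂ :=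
  Complex.ofRealCLM.comp (ContinuousLinearMap.fst ℝ ℝ ℝ) +
    Complex.I • Complex.ofRealCLM.comp (ContinuousLinearMap.snd ℝ ℝ ℝ)

lemma stmt15γ_apply (p : ℝ × ℝ) : stmt15γ p = (p.1 : ℂ) + (p.2 : ℂ) * Complex.I := by
  simp [stmt15γ, mul_comm]

lemma stmt15_comp {f : ℂ → ℂ} {c : ℂ} {p : ℝ × ℝ}
    (hf : HasDerivAt f c ((p.1 : ℂ) + (p.2 : ℂ) * Complex.I)) :
    HasFDerivAt (fun q : ℝ × ℝ => f ((q.1 : ℂ) + (q.2 : ℂ) * Complex.I)) (c • stmt15γ) p := by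
  have h2 : (fun q : ℝ × ℝ => f ((q.1 : ℂ) + (q.2 : ℂ) * Complex.I)) = f ∘ stmt15γ := by
    funext q; simp [stmt15γ_apply]
  rw [h2]
  exact HasDerivAt.comp_hasFDerivAt p (by rwa [stmt15γ_apply]) stmt15γ.hasFDerivAt

@[simp] lemma stmt15_ev_re1 (c : ℂ) : (Complex.reCLM.comp (c • stmt15γ)) (1, 0) = c.re := by
  simp [ContinuousLinearMap.comp_apply, stmt15γ_apply]

@[simp] lemma stmt15_ev_re2 (c : ℂ) : (Complex.reCLM.comp (c • stmt15γ)) (0, 1) = -c.im := by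
  simp [ContinuousLinearMap.comp_apply, stmt15γ_apply, Complex.mul_re]

@[simp] lemma stmt15_ev_im1 (c : ℂ) : (Complex.imCLM.comp (c • stmt15γ)) (1, 0) = c.im := by
  simp [ContinuousLinearMap.comp_apply, stmt15γ_apply]

@[simp] lemma stmt15_ev_im2 (c : ℂ) : (Complex.imCLM.comp (c • stmt15γ)) (0, 1) = c.re := by
  simp [ContinuousLinearMap.comp_apply, stmt15γ_apply, Complex.mul_im]

noncomputable def s15F (f : ℂ → ℂ) (p : ℝ × ℝ) : ℝ := (f ((p.1 : ℂ) + (p.2 : ℂ) * Complex.I)).re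
noncomputable def s15G (f : ℂ → ℂ) (p : ℝ × ℝ) : ℝ := (f ((p.1 : ℂ) + (p.2 : ℂ) * Complex.I)).im
noncomputable def s15R (ψ : ℂ → ℂ) (p : ℝ × ℝ) : ℝ :=
  s15F (deriv ψ) p * s15F (deriv ψ) p + s15G (deriv ψ) p * s15G (deriv ψ) p
noncomputable def s15u1 (ψ : ℂ → ℂ) (q : ℝ × ℝ) : ℝ :=
  2 * (s15F (deriv ψ) q * s15F (deriv (deriv ψ)) q + s15G (deriv ψ) q * s15G (deriv (deriv ψ)) q)
      * (s15R ψ q)⁻¹ - 2 * s15F (deriv ψ) q * (s15F ψ q)⁻¹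
noncomputable def s15u2 (ψ : ℂ → ℂ) (q : ℝ × ℝ) : ℝ :=
  2 * (s15G (deriv ψ) q * s15F (deriv (deriv ψ)) q - s15F (deriv ψ) q * s15G (deriv (deriv ψ)) q)
      * (s15R ψ q)⁻¹ + 2 * s15G (deriv ψ) q * (s15F ψ q)⁻¹

lemma s15F_hasFDerivAt {f : ℂ → ℂ} {c : ℂ} {p : ℝ × ℝ}
    (hf : HasDerivAt f c ((p.1 : ℂ) + (p.2 : ℂ) * Complex.I)) :
    HasFDerivAt (s15F f) (Complex.reCLM.comp (c • stmt15γ)) p :=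
  (Complex.reCLM.hasFDerivAt).comp p (stmt15_comp hf)

lemma s15G_hasFDerivAt {f : ℂ → ℂ} {c : ℂ} {p : ℝ × ℝ}
    (hf : HasDerivAt f c ((p.1 : ℂ) + (p.2 : ℂ) * Complex.I)) :
    HasFDerivAt (s15G f) (Complex.imCLM.comp (c • stmt15γ)) p :=
  (Complex.imCLM.hasFDerivAt).comp p (stmt15_comp hf)

lemma s15F_contDiffAt {f : ℂ → ℂ} {p : ℝ × ℝ}
    (hf : AnalyticAt ℂ f ((p.1 : ℂ) + (p.2 : ℂ) * Complex.I)) :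
    ContDiffAt ℝ 2 (s15F f) p := by
  have h1 : ContDiffAt ℝ 2 f (stmt15γ p) := by
    rw [stmt15γ_apply]; exact hf.contDiffAt.restrict_scalars ℝ
  have h2 : ContDiffAt ℝ 2 (fun q : ℝ × ℝ => f (stmt15γ q)) p :=
    h1.comp p stmt15γ.contDiff.contDiffAt
  have h3 := (Complex.reCLM.contDiff (n := 2)).contDiffAt.comp p h2
  exact h3.congr_of_eventuallyEq
    (Filter.Eventually.of_forall fun x => by simp [s15F, stmt15γ_apply, Function.comp])

lemma s15G_contDiffAt {f : ℂ → ℂ} {p : ℝ × ℝ}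
    (hf : AnalyticAt ℂ f ((p.1 : ℂ) + (p.2 : ℂ) * Complex.I)) :
    ContDiffAt ℝ 2 (s15G f) p := by
  have h1 : ContDiffAt ℝ 2 f (stmt15γ p) := by
    rw [stmt15γ_apply]; exact hf.contDiffAt.restrict_scalars ℝ
  have h2 : ContDiffAt ℝ 2 (fun q : ℝ × ℝ => f (stmt15γ q)) p :=
    h1.comp p stmt15γ.contDiff.contDiffAt
  have h3 := (Complex.imCLM.contDiff (n := 2)).contDiffAt.comp p h2
  exact h3.congr_of_eventuallyEq
    (Filter.Eventually.of_forall fun x => by simp [s15G, stmt15γ_apply, Function.comp])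

set_option maxHeartbeats 2000000 in
theorem stmt_15 (a : ℝ) (ha : 0 < a) (U : Set ℂ) (hU : IsOpen U)
    (ψ : ℂ → ℂ) (hψ : DifferentiableOn ℂ ψ U)
    (hψ' : ∀ z ∈ U, deriv ψ z ≠ 0) (hre : ∀ z ∈ U, 0 < (ψ z).re)
    (V : Set (ℝ × ℝ)) (hV : V = {p : ℝ × ℝ | (p.1 : ℂ) + (p.2 : ℂ) * Complex.I ∈ U})
    (u : ℝ × ℝ → ℂ)
    (hu : u = fun p => 2 * Complex.log
      ((Real.sqrt 8 : ℂ) * (‖deriv ψ ((p.1 : ℂ) + (p.2 : ℂ) * Complex.I)‖ : ℂ) /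
        ((a : ℂ) * (ψ ((p.1 : ℂ) + (p.2 : ℂ) * Complex.I) +
          starRingEnd ℂ (ψ ((p.1 : ℂ) + (p.2 : ℂ) * Complex.I)))))) :
    (∀ p ∈ V, (u p).im = 0) ∧
    ContDiffOn ℝ 2 (fun p => (u p).re) V ∧
    ∀ p ∈ V,
      fderiv ℝ (fun q => fderiv ℝ (fun q' => (u q').re) q (1, 0)) p (1, 0) +
        fderiv ℝ (fun q => fderiv ℝ (fun q' => (u q').re) q (0, 1)) p (0, 1) =
      a ^ 2 * Real.exp ((u p).re) := by
  have hmem : ∀ p ∈ V, (p.1 : ℂ) + (p.2 : ℂ) * Complex.I ∈ U := by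
    intro p hp; rw [hV] at hp; exact hp
  have hVopen : IsOpen V := by
    rw [hV]
    exact hU.preimage (by fun_prop)
  have hAn : AnalyticOnNhd ℂ ψ U := hψ.analyticOnNhd hU
  have hAn1 : AnalyticOnNhd ℂ (deriv ψ) U := hAn.deriv
  have hAn2 : AnalyticOnNhd ℂ (deriv (deriv ψ)) U := hAn1.deriv
  have hD1 : ∀ p ∈ V, HasDerivAt ψ (deriv ψ ((p.1 : ℂ) + (p.2 : ℂ) * Complex.I))
      ((p.1 : ℂ) + (p.2 : ℂ) * Complex.I) :=
    fun p hp => (hAn _ (hmem p hp)).differentiableAt.hasDerivAt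
  have hD2 : ∀ p ∈ V, HasDerivAt (deriv ψ) (deriv (deriv ψ) ((p.1 : ℂ) + (p.2 : ℂ) * Complex.I))
      ((p.1 : ℂ) + (p.2 : ℂ) * Complex.I) :=
    fun p hp => (hAn1 _ (hmem p hp)).differentiableAt.hasDerivAt
  have hD3 : ∀ p ∈ V, HasDerivAt (deriv (deriv ψ))
      (deriv (deriv (deriv ψ)) ((p.1 : ℂ) + (p.2 : ℂ) * Complex.I))
      ((p.1 : ℂ) + (p.2 : ℂ) * Complex.I) :=
    fun p hp => (hAn2 _ (hmem p hp)).differentiableAt.hasDerivAt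
  have hFpos : ∀ p ∈ V, 0 < s15F ψ p := fun p hp => hre _ (hmem p hp)
  have hRpos : ∀ p ∈ V, 0 < s15R ψ p := by
    intro p hp
    have h0 := hψ' _ (hmem p hp)
    have h1 : s15R ψ p = Complex.normSq (deriv ψ ((p.1 : ℂ) + (p.2 : ℂ) * Complex.I)) := by
      simp [s15R, s15F, s15G, Complex.normSq_apply]
    rw [h1]; exact Complex.normSq_pos.2 h0
  -- representation of u on V
  have hrep : ∀ p ∈ V, u p =
      ((Real.log (2 * s15R ψ p / (a ^ 2 * (s15F ψ p * s15F ψ p))) : ℝ) : ℂ) := by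
    intro p hp
    have hF0 := hFpos p hp
    have hR0 := hRpos p hp
    have habs : (0 : ℝ) < ‖deriv ψ ((p.1 : ℂ) + (p.2 : ℂ) * Complex.I)‖ :=
      norm_pos_iff.2 (hψ' _ (hmem p hp))
    have hconj : ψ ((p.1 : ℂ) + (p.2 : ℂ) * Complex.I) +
        starRingEnd ℂ (ψ ((p.1 : ℂ) + (p.2 : ℂ) * Complex.I)) = ((2 * s15F ψ p : ℝ) : ℂ) := by
      rw [Complex.add_conj]; simp [s15F]
    have hr : (0 : ℝ) <
        Real.sqrt 8 * ‖deriv ψ ((p.1 : ℂ) + (p.2 : ℂ) * Complex.I)‖ /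
          (a * (2 * s15F ψ p)) :=
      div_pos (mul_pos (Real.sqrt_pos.2 (by norm_num)) habs)
        (mul_pos ha (by linarith))
    have hcast : (Real.sqrt 8 : ℂ) *
          (‖deriv ψ ((p.1 : ℂ) + (p.2 : ℂ) * Complex.I)‖ : ℂ) /
          ((a : ℂ) * ((2 * s15F ψ p : ℝ) : ℂ)) =
        ((Real.sqrt 8 * ‖deriv ψ ((p.1 : ℂ) + (p.2 : ℂ) * Complex.I)‖ /
          (a * (2 * s15F ψ p)) : ℝ) : ℂ) := by
      push_cast; ring
    have hsq : (Real.sqrt 8 * ‖deriv ψ ((p.1 : ℂ) + (p.2 : ℂ) * Complex.I)‖ /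
          (a * (2 * s15F ψ p))) ^ 2 = 2 * s15R ψ p / (a ^ 2 * (s15F ψ p * s15F ψ p)) := by
      have h8 : Real.sqrt 8 ^ 2 = 8 := Real.sq_sqrt (by norm_num)
      have habs2 : ‖deriv ψ ((p.1 : ℂ) + (p.2 : ℂ) * Complex.I)‖ ^ 2 = s15R ψ p := by
        rw [Complex.sq_norm, Complex.normSq_apply]; simp [s15R, s15F, s15G]
      rw [div_pow, mul_pow, mul_pow, h8, habs2, mul_pow]
      field_simp
      ring
    rw [hu]
    simp only [hconj, hcast, ← Complex.ofReal_log hr.le]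
    rw [← Complex.ofReal_ofNat, ← Complex.ofReal_mul]
    congr 1
    rw [← hsq, Real.log_pow]
    norm_num
  have him : ∀ p ∈ V, (u p).im = 0 := fun p hp => by rw [hrep p hp]; simp
  have hure : ∀ p ∈ V, (u p).re =
      Real.log (2 * s15R ψ p / (a ^ 2 * (s15F ψ p * s15F ψ p))) :=
    fun p hp => by rw [hrep p hp]; simp
  have hGs : ∀ p ∈ V, (u p).re =
      Real.log (s15R ψ p) - 2 * Real.log (s15F ψ p) + (Real.log 2 - 2 * Real.log a) := by
    intro p hp
    have hF0 := (hFpos p hp).ne'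
    have hR0 := (hRpos p hp).ne'
    have ha0 := ha.ne'
    rw [hure p hp, Real.log_div (by positivity) (by positivity),
      Real.log_mul two_ne_zero hR0, Real.log_mul (by positivity) (by positivity),
      Real.log_mul hF0 hF0, Real.log_pow]
    push_cast
    ring
  -- first partial derivatives on V
  have hd1 : ∀ q ∈ V,
      fderiv ℝ (fun q' => (u q').re) q (1, 0) = s15u1 ψ q ∧
      fderiv ℝ (fun q' => (u q').re) q (0, 1) = s15u2 ψ q := by
    intro q hq
    have hF' := s15F_hasFDerivAt (hD1 q hq)
    have hP' := s15F_hasFDerivAt (hD2 q hq)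
    have hQ' := s15G_hasFDerivAt (hD2 q hq)
    have hR' : HasFDerivAt (s15R ψ) _ q := (hP'.mul hP').add (hQ'.mul hQ')
    have hlogR := (Real.hasDerivAt_log (hRpos q hq).ne').comp_hasFDerivAt q hR'
    have hlogF := (Real.hasDerivAt_log (hFpos q hq).ne').comp_hasFDerivAt q hF'
    have hG := (hlogR.sub (hlogF.const_mul (2 : ℝ))).add_const (Real.log 2 - 2 * Real.log a)
    have hder := hG.congr_of_eventuallyEq
      (Filter.eventuallyEq_of_mem (hVopen.mem_nhds hq) (fun x hx => hGs x hx))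
    rw [hder.fderiv]
    constructor <;>
      simp [ContinuousLinearMap.sub_apply, ContinuousLinearMap.add_apply,
        ContinuousLinearMap.smul_apply, s15u1, s15u2, s15R, s15F, s15G, smul_eq_mul, stmt15γ_apply] <;>
      ring
  refine ⟨him, ?_, ?_⟩
  · -- smoothness
    refine ContDiffOn.congr ?_ hure
    intro p hp
    apply ContDiffAt.contDiffWithinAt
    have hcF := s15F_contDiffAt (hAn _ (hmem p hp))
    have hcP := s15F_contDiffAt (hAn1 _ (hmem p hp))
    have hcQ := s15G_contDiffAt (hAn1 _ (hmem p hp))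
    have hcR : ContDiffAt ℝ 2 (s15R ψ) p := (hcP.mul hcP).add (hcQ.mul hcQ)
    have hden : a ^ 2 * (s15F ψ p * s15F ψ p) ≠ 0 := by
      have := (hFpos p hp).ne'; positivity
    have hinner : ContDiffAt ℝ 2
        (fun x => 2 * s15R ψ x / (a ^ 2 * (s15F ψ x * s15F ψ x))) p :=
      (contDiffAt_const.mul hcR).div (contDiffAt_const.mul (hcF.mul hcF)) hden
    have hpos : (0 : ℝ) < 2 * s15R ψ p / (a ^ 2 * (s15F ψ p * s15F ψ p)) :=
      div_pos (by linarith [hRpos p hp]) (by have := hFpos p hp; positivity)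
    exact (Real.contDiffAt_log.2 hpos.ne').comp p hinner
  · -- the Liouville equation
    intro p hp
    have hF' := s15F_hasFDerivAt (hD1 p hp)
    have hP' := s15F_hasFDerivAt (hD2 p hp)
    have hQ' := s15G_hasFDerivAt (hD2 p hp)
    have hA' := s15F_hasFDerivAt (hD3 p hp)
    have hB' := s15G_hasFDerivAt (hD3 p hp)
    have hR' : HasFDerivAt (s15R ψ) _ p := (hP'.mul hP').add (hQ'.mul hQ')
    have hRinv := (hasDerivAt_inv (hRpos p hp).ne').comp_hasFDerivAt p hR'
    have hFinv := (hasDerivAt_inv (hFpos p hp).ne').comp_hasFDerivAt p hF'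
    have h1 : HasFDerivAt (s15u1 ψ) _ p :=
      ((((hP'.mul hA').add (hQ'.mul hB')).const_mul (2 : ℝ)).mul hRinv).sub
        ((hP'.const_mul (2 : ℝ)).mul hFinv)
    have h2 : HasFDerivAt (s15u2 ψ) _ p :=
      ((((hQ'.mul hA').sub (hP'.mul hB')).const_mul (2 : ℝ)).mul hRinv).add
        ((hQ'.const_mul (2 : ℝ)).mul hFinv)
    have hder1 := h1.congr_of_eventuallyEq
      (Filter.eventuallyEq_of_mem (hVopen.mem_nhds hp) (fun x hx => (hd1 x hx).1))
    have hder2 := h2.congr_of_eventuallyEq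
      (Filter.eventuallyEq_of_mem (hVopen.mem_nhds hp) (fun x hx => (hd1 x hx).2))
    rw [hder1.fderiv, hder2.fderiv]
    have hexp : Real.exp ((u p).re) = 2 * s15R ψ p / (a ^ 2 * (s15F ψ p * s15F ψ p)) := by
      rw [hure p hp]
      exact Real.exp_log (div_pos (by linarith [hRpos p hp])
        (by have := hFpos p hp; positivity))
    rw [hexp]
    have hFne := (hFpos p hp).ne'
    have hRne := (hRpos p hp).ne'
    simp only [ContinuousLinearMap.sub_apply, ContinuousLinearMap.add_apply,
      ContinuousLinearMap.smul_apply, stmt15_ev_re1, stmt15_ev_re2, stmt15_ev_im1,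
      stmt15_ev_im2, smul_eq_mul, Function.comp_apply]
    simp only [s15R, s15F, s15G, Pi.mul_apply, Pi.add_apply, Pi.sub_apply] at hFne hRne ⊢
    field_simp
    ring
end
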